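/- Let G be a bipartite graph with parts V1, V2, in which every vertex of V1 has degree r ≥ 2 and every vertex of V2 has degree s ≥ 2, and suppose G has diameter at most 2m for some m ≥ 1. Then |V2| ≤ r · ((r-1)(s-1))^m - 1) / ((r-1)(s-1) - 1), i.e., |V2| ≤ r · (1 + (r-1)(s-1) + ... + ((r-1)(s-1))^{m-1}). -/

import Mathlib

open Finset SimpleGraph

theorem stmt_1 {V : Type*} [Fintype V] (G : SimpleGraph V) (V1 V2 : Finset V)
    (hpart : ∀ v, (v ∈ V1 ∧ v ∉ V2) ∨ (v ∈ V2 ∧ v ∉ V1))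
    (hbip : ∀ u v, G.Adj u v → (u ∈ V1 ∧ v ∈ V2) ∨ (u ∈ V2 ∧ v ∈ V1))
    (r s m : ℕ) (hr : 2 ≤ r) (hs : 2 ≤ s) (hm : 1 ≤ m)
    (hdeg1 : ∀ v ∈ V1, (G.neighborSet v).ncard = r)
    (hdeg2 : ∀ v ∈ V2, (G.neighborSet v).ncard = s)
    (hconn : G.Connected) (hdiam : G.diam ≤ 2 * m) :
    V2.card ≤ r * ∑ i ∈ Finset.range m, ((r - 1) * (s - 1)) ^ i := by
  classical
  rcases V2.eq_empty_or_nonempty with hV2 | ⟨v0, hv0⟩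
  · simp [hV2]
  -- complementarity
  have hcompl : ∀ v : V, v ∈ V2 ↔ v ∉ V1 := by
    intro v; rcases hpart v with ⟨h1, h2⟩ | ⟨h1, h2⟩ <;> simp [h1, h2]
  -- degree = ncard of neighborSet
  have hncard : ∀ w : V, G.degree w = (G.neighborSet w).ncard := by
    intro w
    rw [← SimpleGraph.card_neighborFinset_eq_degree, SimpleGraph.neighborFinset_def,
      Set.ncard_eq_toFinset_card']
  -- pick u ∈ V1
  have hdv0 : (G.neighborSet v0).ncard = s := hdeg2 v0 hv0
  have hne : (G.neighborSet v0).Nonempty := by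
    apply Set.nonempty_of_ncard_ne_zero; omega
  obtain ⟨u, hu_adj⟩ := hne
  have hu_adj' : G.Adj v0 u := hu_adj
  have hu : u ∈ V1 := by
    rcases hbip v0 u hu_adj' with ⟨h1, _⟩ | ⟨_, h2⟩
    · exact absurd h1 ((hcompl v0).mp hv0)
    · exact h2
  -- parity of walks
  have parity : ∀ (a b : V) (p : G.Walk a b), ((a ∈ V1 ↔ b ∈ V1) ↔ Even p.length) := by
    intro a b p
    induction p with
    | nil => simp
    | @cons x y z h q ih =>
      have h2 := hbip x y h
      have hx := hcompl x
      have hy := hcompl y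
      simp only [SimpleGraph.Walk.length_cons, Nat.even_add_one, ← ih]
      tauto
  have hside : ∀ w : V, w ∈ V1 ↔ Even (G.dist u w) := by
    intro w
    obtain ⟨p, hp⟩ := hconn.exists_walk_length_eq_dist u w
    have := parity u w p
    rw [hp] at this
    tauto
  -- spheres
  set S : ℕ → Finset V := fun k => Finset.univ.filter (fun w => G.dist u w = k) with hS
  have hmemS : ∀ k w, w ∈ S k ↔ G.dist u w = k := by
    intro k w; simp [hS]
  -- predecessor lemma
  have hpred : ∀ (v : V) (j : ℕ), G.dist u v = j + 1 → ∃ w, G.Adj w v ∧ G.dist u w = j := by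
    intro v j hj
    obtain ⟨p, hp⟩ := hconn.exists_walk_length_eq_dist u v
    rw [hj] at hp
    have hq : p.reverse.length = j + 1 := by rwa [SimpleGraph.Walk.length_reverse]
    cases hrev : p.reverse with
    | nil => rw [hrev] at hq; simp at hq
    | @cons _ w _ h q =>
      refine ⟨w, h.symm, ?_⟩
      rw [hrev] at hq
      simp only [SimpleGraph.Walk.length_cons] at hq
      have hle : G.dist u w ≤ j := by
        have := SimpleGraph.dist_le q.reverse
        rw [SimpleGraph.Walk.length_reverse] at this
        omega
      have ht := hconn.dist_triangle (u := u) (v := w) (w := v)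
      have hwv : G.dist w v = 1 := SimpleGraph.dist_eq_one_iff_adj.mpr h.symm
      rw [hj, hwv] at ht
      omega
  -- the counting step
  have step : ∀ k d : ℕ, 1 ≤ k → 1 ≤ d → (∀ w : V, G.dist u w = k → G.degree w = d) →
      (S (k + 1)).card ≤ (S k).card * (d - 1) := by
    intro k d hk hd hdk
    choose! g hg1 hg2 using fun v : V => hpred v k
    have hfib : (S (k + 1)).card
        = ∑ w ∈ S k, ((S (k + 1)).filter (fun v => g v = w)).card := by
      apply Finset.card_eq_sum_card_fiberwise
      intro v hv
      rw [Finset.mem_coe, hmemS] at hv ⊢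
      exact hg2 v hv
    rw [hfib]
    have hbound : ∀ w ∈ S k, ((S (k + 1)).filter (fun v => g v = w)).card ≤ d - 1 := by
      intro w hw
      rw [hmemS] at hw
      obtain ⟨x, hxw, hxd⟩ := hpred w (k - 1) (by omega)
      have hsub : (S (k + 1)).filter (fun v => g v = w) ⊆ G.neighborFinset w \ {x} := by
        intro v hv
        simp only [Finset.mem_filter] at hv
        obtain ⟨hv1, hv2⟩ := hv
        rw [hmemS] at hv1
        have hadj : G.Adj w v := by rw [← hv2]; exact hg1 v hv1
        have hvx : v ≠ x := by
          intro hvx; rw [hvx] at hv1; omega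
        rw [Finset.mem_sdiff, SimpleGraph.mem_neighborFinset, Finset.mem_singleton]
        exact ⟨hadj, hvx⟩
      calc ((S (k + 1)).filter (fun v => g v = w)).card
          ≤ (G.neighborFinset w \ {x}).card := Finset.card_le_card hsub
        _ = G.degree w - 1 := by
            rw [Finset.card_sdiff, Finset.singleton_inter_of_mem (by
              rw [SimpleGraph.mem_neighborFinset]
              exact hxw.symm)]
            rw [Finset.card_singleton]
            rfl
        _ = d - 1 := by rw [hdk w hw]
    calc ∑ w ∈ S k, ((S (k + 1)).filter (fun v => g v = w)).card
        ≤ ∑ _w ∈ S k, (d - 1) := Finset.sum_le_sum hbound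
      _ = (S k).card * (d - 1) := by rw [Finset.sum_const, smul_eq_mul]
  -- degrees at odd/even distances
  have hdeg_odd : ∀ i : ℕ, ∀ w : V, G.dist u w = 2 * i + 1 → G.degree w = s := by
    intro i w hw
    have : w ∉ V1 := by
      rw [hside, hw]; simp [Nat.even_add_one, Nat.even_mul]
    have hw2 : w ∈ V2 := (hcompl w).mpr this
    rw [hncard]; exact hdeg2 w hw2
  have hdeg_even : ∀ i : ℕ, ∀ w : V, G.dist u w = 2 * i → G.degree w = r := by
    intro i w hw
    have hw1 : w ∈ V1 := by
      rw [hside, hw]; simp [Nat.even_mul]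
    rw [hncard]; exact hdeg1 w hw1
  -- base case
  have base : (S 1).card ≤ r := by
    have hsub : S 1 ⊆ G.neighborFinset u := by
      intro w hw
      rw [hmemS] at hw
      rw [SimpleGraph.mem_neighborFinset]
      exact SimpleGraph.dist_eq_one_iff_adj.mp hw
    calc (S 1).card ≤ (G.neighborFinset u).card := Finset.card_le_card hsub
      _ = G.degree u := rfl
      _ = r := by rw [hncard]; exact hdeg1 u hu
  -- bound odd layers
  have layers : ∀ i : ℕ, (S (2 * i + 1)).card ≤ r * ((r - 1) * (s - 1)) ^ i := by
    intro i
    induction i with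
    | zero => simpa using base
    | succ i ih =>
      have h1 : (S (2 * i + 2)).card ≤ (S (2 * i + 1)).card * (s - 1) :=
        step (2 * i + 1) s (by omega) (by omega) (hdeg_odd i)
      have h2 : (S (2 * i + 3)).card ≤ (S (2 * i + 2)).card * (r - 1) := by
        have := step (2 * i + 2) r (by omega) (by omega)
          (by intro w hw; exact hdeg_even (i + 1) w (by omega))
        exact this
      rw [show 2 * (i + 1) + 1 = 2 * i + 3 from by ring]
      calc (S (2 * i + 3)).card ≤ (S (2 * i + 3)).card := le_refl _
        _ ≤ (S (2 * i + 2)).card * (r - 1) := h2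
        _ ≤ ((S (2 * i + 1)).card * (s - 1)) * (r - 1) := by
            exact Nat.mul_le_mul_right _ h1
        _ ≤ (r * ((r - 1) * (s - 1)) ^ i * (s - 1)) * (r - 1) := by
            exact Nat.mul_le_mul_right _ (Nat.mul_le_mul_right _ ih)
        _ = r * ((r - 1) * (s - 1)) ^ (i + 1) := by ring
  -- ediam ≠ ⊤
  have hV : Nonempty V := ⟨v0⟩
  have hediam : G.ediam ≠ ⊤ := by
    obtain ⟨a, b, hab⟩ := SimpleGraph.exists_edist_eq_ediam_of_finite (G := G)
    rw [← hab]
    exact SimpleGraph.edist_ne_top_iff_reachable.mpr (hconn a b)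
  -- V2 covered by odd spheres
  have hsub : V2 ⊆ (Finset.range m).biUnion (fun i => S (2 * i + 1)) := by
    intro w hw
    have hle : G.dist u w ≤ 2 * m := le_trans (SimpleGraph.dist_le_diam hediam) hdiam
    have hodd : ¬ Even (G.dist u w) := by
      rw [← hside]; exact (hcompl w).mp hw
    rw [Nat.not_even_iff_odd] at hodd
    obtain ⟨i, hi⟩ := hodd
    rw [Finset.mem_biUnion]
    exact ⟨i, Finset.mem_range.mpr (by omega), (hmemS _ w).mpr (by omega)⟩
  calc V2.card ≤ ((Finset.range m).biUnion (fun i => S (2 * i + 1))).card :=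
        Finset.card_le_card hsub
    _ ≤ ∑ i ∈ Finset.range m, (S (2 * i + 1)).card := Finset.card_biUnion_le
    _ ≤ ∑ i ∈ Finset.range m, r * ((r - 1) * (s - 1)) ^ i :=
        Finset.sum_le_sum (fun i _ => layers i)
    _ = r * ∑ i ∈ Finset.range m, ((r - 1) * (s - 1)) ^ i := by rw [Finset.mul_sum]
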